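/- Every bounded sequence (x_n) in a real Banach space X contains a subsequence (e_n) with the following property: for every finitely supported sequence of reals a = (a_1, a_2, …) there exists a real number L(a) such that for every ε > 0 there exists a positive integer ν such that |‖Σ_i a_i·e_{n_i}‖ − L(a)| ≤ ε for all strictly increasing sequences of integers ν ≤ n_1 < n_2 < ⋯ indexing the support of a. -/

import Mathlib

open Set Real Filter

set_option maxHeartbeats 1000000



lemma bs_ramsey_stab (k : ℕ) :
    ∀ (g : Finset ℕ → ℝ) (C : ℝ), (∀ s, |g s| ≤ C) →
    ∀ (ε : ℝ), 0 < ε → ∀ (S : Set ℕ), S.Infinite →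
    ∃ T, T ⊆ S ∧ T.Infinite ∧ ∀ s t : Finset ℕ, ↑s ⊆ T → ↑t ⊆ T →
      s.card = k → t.card = k → |g s - g t| ≤ ε := by
  induction k with
  | zero =>
    intro g C hC ε hε S hS
    refine ⟨S, subset_rfl, hS, ?_⟩
    intro s t _ _ hs ht
    rw [Finset.card_eq_zero] at hs ht
    subst hs; subst ht; simpa using hε.le
  | succ k ih =>
    intro g C hC ε hε S hS
    have hstep : ∀ S' : Set ℕ, S'.Infinite →
        ∃ T, T ⊆ S' ∩ Set.Ioi (sInf S') ∧ T.Infinite ∧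
          ∀ s t : Finset ℕ, ↑s ⊆ T → ↑t ⊆ T → s.card = k → t.card = k →
            |g (insert (sInf S') s) - g (insert (sInf S') t)| ≤ ε / 3 := by
      intro S' hS'
      have hinf : (S' ∩ Set.Ioi (sInf S')).Infinite := by
        have : S' \ Set.Iic (sInf S') = S' ∩ Set.Ioi (sInf S') := by
          ext u; simp [Set.mem_diff, not_le]
        rw [← this]
        exact hS'.diff (Set.finite_Iic _)
      obtain ⟨T, hT1, hT2, hT3⟩ :=
        ih (fun s => g (insert (sInf S') s)) C (fun s => hC _) (ε / 3) (by positivity) _ hinf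
      exact ⟨T, hT1, hT2, hT3⟩
    -- recursive sequence of infinite sets
    let seq : ℕ → {p : Set ℕ // p.Infinite} := fun n =>
      Nat.rec ⟨S, hS⟩ (fun _ p => ⟨(hstep p.1 p.2).choose,
        (hstep p.1 p.2).choose_spec.2.1⟩) n
    set m : ℕ → ℕ := fun i => sInf (seq i).1 with hm
    have hseq_succ : ∀ i, (seq (i+1)).1 = (hstep (seq i).1 (seq i).2).choose := fun i => rfl
    have hsub : ∀ i, (seq (i+1)).1 ⊆ (seq i).1 ∩ Set.Ioi (m i) := by
      intro i; rw [hseq_succ i]; exact (hstep (seq i).1 (seq i).2).choose_spec.1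
    have hstab : ∀ i, ∀ s t : Finset ℕ, ↑s ⊆ (seq (i+1)).1 → ↑t ⊆ (seq (i+1)).1 →
        s.card = k → t.card = k →
        |g (insert (m i) s) - g (insert (m i) t)| ≤ ε / 3 := by
      intro i; rw [hseq_succ i]; exact (hstep (seq i).1 (seq i).2).choose_spec.2.2
    have hmmem : ∀ i, m i ∈ (seq i).1 := fun i => Nat.sInf_mem ((seq i).2.nonempty)
    have hchain : ∀ i j, i ≤ j → (seq j).1 ⊆ (seq i).1 := by
      intro i j hij
      induction j with
      | zero => simp_all
      | succ j ihh =>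
        rcases Nat.lt_or_ge i (j+1) with h | h
        · exact ((hsub j).trans inter_subset_left).trans (ihh (Nat.lt_succ_iff.mp h))
        · have : i = j + 1 := le_antisymm hij h
          subst this; exact subset_rfl
    have hmono : StrictMono m := by
      apply strictMono_nat_of_lt_succ
      intro i
      exact ((hsub i) (hmmem (i+1))).2
    have hgt : ∀ i j, i < j → ∀ u ∈ (seq j).1, m i < u := by
      intro i j hij u hu
      exact ((hsub i) (hchain (i+1) j hij hu)).2
    -- pick a k-element subset of each seq (i+1)
    have hpick : ∀ i, ∃ p : Finset ℕ, ↑p ⊆ (seq (i+1)).1 ∧ p.card = k := by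
      intro i
      obtain ⟨p, hp1, hp2⟩ := (seq (i+1)).2.exists_subset_card_eq k
      exact ⟨p, hp1, hp2⟩
    choose pick hpick1 hpick2 using hpick
    set c : ℕ → ℝ := fun i => g (insert (m i) (pick i)) with hc
    have hcmem : ∀ i, c i ∈ Set.Icc (-C) C := by
      intro i
      rw [Set.mem_Icc, ← abs_le]
      exact hC _
    obtain ⟨galim, -, ψ, hψ, hψlim⟩ := (isCompact_Icc (a := -C) (b := C)).tendsto_subseq hcmem
    rw [Metric.tendsto_atTop] at hψlim
    obtain ⟨N, hN⟩ := hψlim (ε / 6) (by positivity)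
    refine ⟨(fun i => m (ψ i)) '' Set.Ici N, ?_, ?_, ?_⟩
    · rintro u ⟨i, -, rfl⟩
      exact hchain 0 (ψ i) (Nat.zero_le _) (hmmem (ψ i))
    · exact (Set.Ici_infinite N).image (fun i _ j _ h => hψ.injective (hmono.injective h))
    · have key : ∀ s : Finset ℕ, ↑s ⊆ (fun i => m (ψ i)) '' Set.Ici N → s.card = k + 1 →
          |g s - galim| ≤ ε / 3 + ε / 6 := by
        intro s hsT hscard
        have hne : s.Nonempty := Finset.card_pos.mp (by omega)
        obtain ⟨i₀, hi₀N, hμ⟩ := hsT (s.min'_mem hne)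
        set μ := s.min' hne
        have hμ' : m (ψ i₀) = μ := hμ
        set s' := s.erase μ with hs'
        have hs'card : s'.card = k := by
          rw [hs', Finset.card_erase_of_mem (s.min'_mem hne), hscard]
          omega
        have hs'sub : ↑s' ⊆ (seq (ψ i₀ + 1)).1 := by
          intro u hu
          rcases hu with hu
          have hus : u ∈ s := Finset.mem_of_mem_erase hu
          obtain ⟨j, hjN, hju⟩ := hsT hus
          have hju' : m (ψ j) = u := hju
          have huμ : μ < u := by
            rcases lt_of_le_of_ne (s.min'_le u hus) (fun h => (Finset.ne_of_mem_erase hu) h.symm) with h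
            exact h
          have : ψ i₀ < ψ j := by
            by_contra hcon
            push_neg at hcon
            have := hmono.le_iff_le.mpr hcon
            omega
          have : ψ i₀ + 1 ≤ ψ j := this
          rw [← hju']
          exact hchain _ _ this (hmmem (ψ j))
        have h1 : |g (insert (m (ψ i₀)) s') - c (ψ i₀)| ≤ ε / 3 :=
          hstab (ψ i₀) s' (pick (ψ i₀)) hs'sub (hpick1 (ψ i₀)) hs'card (hpick2 (ψ i₀))
        have h2 : insert (m (ψ i₀)) s' = s := by
          rw [hμ', hs']
          exact Finset.insert_erase (s.min'_mem hne)
        have h3 : |c (ψ i₀) - galim| ≤ ε / 6 := by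
          have := hN i₀ hi₀N
          rw [Real.dist_eq] at this
          exact this.le
        calc |g s - galim| = |(g s - c (ψ i₀)) + (c (ψ i₀) - galim)| := by ring_nf
          _ ≤ |g s - c (ψ i₀)| + |c (ψ i₀) - galim| := abs_add_le _ _
          _ ≤ ε / 3 + ε / 6 := by
              rw [← h2]
              exact add_le_add h1 h3
      intro s t hsT htT hscard htcard
      have h1 := key s hsT hscard
      have h2 := key t htT htcard
      calc |g s - g t| = |(g s - galim) - (g t - galim)| := by ring_nf
        _ ≤ |g s - galim| + |g t - galim| := abs_sub _ _
        _ ≤ (ε/3 + ε/6) + (ε/3 + ε/6) := add_le_add h1 h2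
        _ = ε := by ring

lemma bs_master (g : ℕ → Finset ℕ → ℝ) (K : ℕ → ℕ)
    (hb : ∀ r, ∃ C, ∀ s, |g r s| ≤ C) :
    ∃ φ : ℕ → ℕ, StrictMono φ ∧ ∀ r, ∃ L : ℝ, ∀ ε : ℝ, 0 < ε → ∃ ν : ℕ,
      ∀ s : Finset ℕ, s.card = K r → ↑s ⊆ φ '' Set.Ici ν → |g r s - L| ≤ ε := by
  classical
  set E := Denumerable.eqv (ℕ × ℕ) with hE
  have hstep : ∀ (p : ℕ) (S' : Set ℕ), S'.Infinite →
      ∃ T, T ⊆ S' ∧ T.Infinite ∧ ∀ s t : Finset ℕ, ↑s ⊆ T → ↑t ⊆ T →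
        s.card = K (E.symm p).1 → t.card = K (E.symm p).1 →
        |g (E.symm p).1 s - g (E.symm p).1 t| ≤ 1 / ((E.symm p).2 + 1) := by
    intro p S' hS'
    obtain ⟨C, hC⟩ := hb (E.symm p).1
    exact bs_ramsey_stab (K (E.symm p).1) (g (E.symm p).1) C hC (1 / ((E.symm p).2 + 1))
      (by positivity) S' hS'
  let seq : ℕ → {p : Set ℕ // p.Infinite} := fun n =>
    Nat.rec ⟨Set.univ, Set.infinite_univ⟩
      (fun q p => ⟨(hstep q p.1 p.2).choose, (hstep q p.1 p.2).choose_spec.2.1⟩) n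
  have hseq_succ : ∀ p, (seq (p+1)).1 = (hstep p (seq p).1 (seq p).2).choose := fun p => rfl
  have hsub : ∀ p, (seq (p+1)).1 ⊆ (seq p).1 := by
    intro p; rw [hseq_succ p]; exact (hstep p (seq p).1 (seq p).2).choose_spec.1
  have hstab : ∀ p, ∀ s t : Finset ℕ, ↑s ⊆ (seq (p+1)).1 → ↑t ⊆ (seq (p+1)).1 →
      s.card = K (E.symm p).1 → t.card = K (E.symm p).1 →
      |g (E.symm p).1 s - g (E.symm p).1 t| ≤ 1 / ((E.symm p).2 + 1) := by
    intro p; rw [hseq_succ p]; exact (hstep p (seq p).1 (seq p).2).choose_spec.2.2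
  have hchain : ∀ i j, i ≤ j → (seq j).1 ⊆ (seq i).1 := by
    intro i j hij
    induction j with
    | zero => simp_all
    | succ j ihh =>
      rcases Nat.lt_or_ge i (j+1) with h | h
      · exact (hsub j).trans (ihh (Nat.lt_succ_iff.mp h))
      · have : i = j + 1 := le_antisymm hij h
        subst this; exact subset_rfl
  -- define φ
  let φ : ℕ → ℕ := fun n => Nat.rec (sInf (seq 0).1)
    (fun q prev => sInf ((seq (q+1)).1 ∩ Set.Ioi prev)) n
  have hφ_succ : ∀ p, φ (p+1) = sInf ((seq (p+1)).1 ∩ Set.Ioi (φ p)) := fun p => rfl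
  have hφmem : ∀ p, φ p ∈ (seq p).1 ∧ (p = 0 ∨ ∀ q, p = q + 1 → φ q < φ p) := by
    intro p
    cases p with
    | zero => exact ⟨Nat.sInf_mem (seq 0).2.nonempty, Or.inl rfl⟩
    | succ q =>
      have hinf : ((seq (q+1)).1 ∩ Set.Ioi (φ q)).Infinite := by
        have : (seq (q+1)).1 \ Set.Iic (φ q) = (seq (q+1)).1 ∩ Set.Ioi (φ q) := by
          ext u; simp [Set.mem_diff, not_le]
        rw [← this]
        exact (seq (q+1)).2.diff (Set.finite_Iic _)
      have hmem := Nat.sInf_mem hinf.nonempty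
      rw [← hφ_succ q] at hmem
      exact ⟨hmem.1, Or.inr fun q' hq' => by
        cases hq'; exact hmem.2⟩
  have hφmono : StrictMono φ := by
    apply strictMono_nat_of_lt_succ
    intro n
    rcases (hφmem (n+1)).2 with h | h
    · omega
    · exact h n rfl
  have htail : ∀ p n, p ≤ n → φ n ∈ (seq p).1 := fun p n hpn =>
    hchain p n hpn (hφmem n).1
  refine ⟨φ, hφmono, ?_⟩
  intro r
  -- key stabilization in terms of φ
  have key : ∀ m : ℕ, ∀ s t : Finset ℕ, s.card = K r → t.card = K r →
      ↑s ⊆ φ '' Set.Ici (E (r, m) + 1) → ↑t ⊆ φ '' Set.Ici (E (r, m) + 1) →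
      |g r s - g r t| ≤ 1 / (m + 1) := by
    intro m s t hs ht hsT htT
    set p := E (r, m) with hp
    have hdec : E.symm p = (r, m) := E.symm_apply_apply (r, m)
    have himg : φ '' Set.Ici (p + 1) ⊆ (seq (p+1)).1 := by
      rintro u ⟨n, hn, rfl⟩
      exact htail (p+1) n hn
    have := hstab p s t (hsT.trans himg) (htT.trans himg)
      (by rw [hdec]; exact hs) (by rw [hdec]; exact ht)
    rw [hdec] at this
    exact this
  -- the canonical tuples
  have htupl : ∀ n : ℕ, ∃ s : Finset ℕ, s.card = K r ∧ ↑s ⊆ φ '' Set.Ici n := by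
    intro n
    refine ⟨Finset.image (fun t => φ (n + t)) (Finset.range (K r)), ?_, ?_⟩
    · rw [Finset.card_image_of_injective _ (fun a b hab =>
        by have := hφmono.injective hab; omega), Finset.card_range]
    · intro u hu
      simp only [Finset.coe_image, Set.mem_image] at hu
      obtain ⟨t, -, rfl⟩ := hu
      exact ⟨n + t, by simp, rfl⟩
  choose tupl htupl1 htupl2 using htupl
  set u : ℕ → ℝ := fun n => g r (tupl n) with hu
  have hucau : CauchySeq u := by
    rw [Metric.cauchySeq_iff']
    intro ε hε
    obtain ⟨m, hm⟩ := exists_nat_one_div_lt (K := ℝ) hε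
    refine ⟨E (r, m) + 1, ?_⟩
    intro n hn
    have h1 : ↑(tupl n) ⊆ φ '' Set.Ici (E (r, m) + 1) :=
      (htupl2 n).trans (Set.image_mono (Set.Ici_subset_Ici.mpr hn))
    have := key m (tupl n) (tupl (E (r, m) + 1)) (htupl1 n) (htupl1 _)
      h1 (htupl2 _)
    rw [Real.dist_eq]
    calc |u n - u (E (r, m) + 1)| ≤ 1 / (m + 1) := this
      _ < ε := by exact_mod_cast hm
  obtain ⟨L, hL⟩ := cauchySeq_tendsto_of_complete hucau
  refine ⟨L, ?_⟩
  intro ε hε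
  obtain ⟨m, hm⟩ := exists_nat_one_div_lt (K := ℝ) (half_pos hε)
  refine ⟨E (r, m) + 1, ?_⟩
  intro s hscard hssub
  -- pick n large with |u n - L| ≤ ε/2 and n ≥ ν
  rw [Metric.tendsto_atTop] at hL
  obtain ⟨N, hN⟩ := hL (ε / 2) (half_pos hε)
  set n := max N (E (r, m) + 1) with hn
  have h1 : |g r s - u n| ≤ 1 / (m + 1) := by
    apply key m s (tupl n) hscard (htupl1 n) hssub
    exact (htupl2 n).trans (Set.image_mono (Set.Ici_subset_Ici.mpr (le_max_right _ _)))
  have h2 : |u n - L| < ε / 2 := by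
    have := hN n (le_max_left _ _)
    rwa [Real.dist_eq] at this
  calc |g r s - L| = |(g r s - u n) + (u n - L)| := by ring_nf
    _ ≤ |g r s - u n| + |u n - L| := abs_add_le _ _
    _ ≤ 1 / (m + 1) + ε / 2 := add_le_add h1 h2.le
    _ ≤ ε / 2 + ε / 2 := by
        have : (1 : ℝ) / (m + 1) ≤ ε / 2 := by exact_mod_cast hm.le
        linarith
    _ = ε := by ring

lemma bs_list_sum {β M : Type*} [AddCommMonoid M] (F : β → M) (d : β) :
    ∀ l : List β, (l.map F).sum = ∑ t ∈ Finset.range l.length, F (l.getD t d) := by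
  intro l
  induction l with
  | nil => simp
  | cons a l ih =>
    rw [List.map_cons, List.sum_cons, List.length_cons, Finset.sum_range_succ']
    simp [ih, add_comm]

lemma bs_finset_sum {M : Type*} [AddCommMonoid M] (b : Finset ℕ) (F : ℕ → M) :
    ∑ i ∈ b, F i = ∑ t ∈ Finset.range b.card, F ((b.sort (· ≤ ·)).getD t 0) := by
  have h1 : ∑ i ∈ b, F i = ((b.sort (· ≤ ·)).map F).sum := by
    rw [← Finset.sum_map_toList]
    exact (List.Perm.sum_eq (List.Perm.map F (Finset.sort_perm_toList b (· ≤ ·)))).symm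
  rw [h1, bs_list_sum F 0, Finset.length_sort]

lemma bs_sort_image (f : ℕ → ℕ) (hf : StrictMono f) (s : Finset ℕ) :
    ((s.image f).sort (· ≤ ·)) = (s.sort (· ≤ ·)).map f := by
  refine (fun hp h1 h2 => List.Perm.eq_of_pairwise' (r := (· ≤ · : ℕ → ℕ → Prop)) h1 h2 hp) ?_ ?_ ?_
  · rw [← Multiset.coe_eq_coe]
    calc (↑((s.image f).sort (· ≤ ·)) : Multiset ℕ)
        = (s.image f).1 := Finset.sort_eq _ _
      _ = s.1.map f := Finset.image_val_of_injOn (hf.injective.injOn)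
      _ = Multiset.map f ↑(s.sort (· ≤ ·)) := by rw [Finset.sort_eq]
      _ = ↑((s.sort (· ≤ ·)).map f) := by rw [Multiset.map_coe]
  · exact Finset.pairwise_sort _ _
  · exact List.Pairwise.map f (fun a b h => hf.monotone h) (Finset.pairwise_sort s (· ≤ ·))

/-- **Proposition (Brunel–Sucheston).**  Every bounded sequence in a real Banach space
contains a subsequence `e_n = x_{φ(n)}` such that for every finitely supported sequence of
reals `a` there is a limit `L(a)`: for every `ε > 0` there is `ν` such that
`|‖∑ i, a i • e (n i)‖ - L(a)| ≤ ε` for all strictly increasing choices of indices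
`n` with all values `≥ ν`. -/
theorem brunel_sucheston
    (X : Type*) [NormedAddCommGroup X] [NormedSpace ℝ X] [CompleteSpace X]
    (x : ℕ → X) (hx : ∃ C : ℝ, ∀ n, ‖x n‖ ≤ C) :
    ∃ φ : ℕ → ℕ, StrictMono φ ∧
      ∀ a : ℕ →₀ ℝ, ∃ L : ℝ, ∀ ε : ℝ, 0 < ε →
        ∃ ν : ℕ, 0 < ν ∧ ∀ n : ℕ → ℕ, StrictMono n → (∀ i, ν ≤ n i) →
          |‖∑ i ∈ a.support, a i • x (φ (n i))‖ - L| ≤ ε := by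
  classical
  obtain ⟨C₀, hC₀⟩ := hx
  set C : ℝ := max C₀ 0 with hCdef
  have hCnn : (0 : ℝ) ≤ C := le_max_right _ _
  have hxC : ∀ n, ‖x n‖ ≤ C := fun n => (hC₀ n).trans (le_max_left _ _)
  set gJ : List ℚ → Finset ℕ → ℝ := fun qs s =>
    ‖∑ t ∈ Finset.range qs.length, (qs.getD t 0 : ℝ) • x ((s.sort (· ≤ ·)).getD t 0)‖
    with hgJ
  set G : ℕ → Finset ℕ → ℝ := fun r s =>
    ((Encodable.decode (α := List ℚ) r).elim 0 (fun qs => gJ qs s)) with hG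
  set K : ℕ → ℕ := fun r =>
    ((Encodable.decode (α := List ℚ) r).elim 0 List.length) with hK
  have hGenc : ∀ qs : List ℚ, ∀ s, G (Encodable.encode qs) s = gJ qs s := by
    intro qs s; simp [hG, Encodable.encodek]
  have hKenc : ∀ qs : List ℚ, K (Encodable.encode qs) = qs.length := by
    intro qs; simp [hK, Encodable.encodek]
  -- difference of two coefficient sums
  have hdiff : ∀ (k : ℕ) (c c' : ℕ → ℝ) (y : ℕ → X), (∀ t, ‖y t‖ ≤ C) →
      |‖∑ t ∈ Finset.range k, c t • y t‖ - ‖∑ t ∈ Finset.range k, c' t • y t‖| ≤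
        ∑ t ∈ Finset.range k, |c t - c' t| * C := by
    intro k c c' y hy
    calc |‖∑ t ∈ Finset.range k, c t • y t‖ - ‖∑ t ∈ Finset.range k, c' t • y t‖|
        ≤ ‖(∑ t ∈ Finset.range k, c t • y t) - ∑ t ∈ Finset.range k, c' t • y t‖ :=
          abs_norm_sub_norm_le _ _
      _ = ‖∑ t ∈ Finset.range k, (c t - c' t) • y t‖ := by
          rw [← Finset.sum_sub_distrib]
          congr 1
          exact Finset.sum_congr rfl (fun t _ => (sub_smul _ _ _).symm)
      _ ≤ ∑ t ∈ Finset.range k, ‖(c t - c' t) • y t‖ := norm_sum_le _ _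
      _ ≤ ∑ t ∈ Finset.range k, |c t - c' t| * C := by
          apply Finset.sum_le_sum
          intro t _
          rw [norm_smul, Real.norm_eq_abs]
          exact mul_le_mul_of_nonneg_left (hy t) (abs_nonneg _)
  -- boundedness
  have hb : ∀ r, ∃ C', ∀ s, |G r s| ≤ C' := by
    intro r
    rcases h : Encodable.decode (α := List ℚ) r with _ | qs
    · exact ⟨0, fun s => by simp [hG, h]⟩
    · refine ⟨∑ t ∈ Finset.range qs.length, |(qs.getD t 0 : ℝ)| * C, fun s => ?_⟩
      have : G r s = gJ qs s := by simp [hG, h]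
      rw [this, hgJ]
      rw [abs_norm]
      calc ‖∑ t ∈ Finset.range qs.length, (qs.getD t 0 : ℝ) • x ((s.sort (· ≤ ·)).getD t 0)‖
          ≤ ∑ t ∈ Finset.range qs.length,
              ‖(qs.getD t 0 : ℝ) • x ((s.sort (· ≤ ·)).getD t 0)‖ := norm_sum_le _ _
        _ ≤ ∑ t ∈ Finset.range qs.length, |(qs.getD t 0 : ℝ)| * C := by
            apply Finset.sum_le_sum
            intro t _
            rw [norm_smul, Real.norm_eq_abs]
            exact mul_le_mul_of_nonneg_left (hxC _) (abs_nonneg _)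
  obtain ⟨φ, hφmono, hspec⟩ := bs_master G K hb
  choose Lfun hLfun using hspec
  refine ⟨φ, hφmono, ?_⟩
  intro a
  set k := a.support.card with hk
  set l := a.support.sort (· ≤ ·) with hl
  have hllen : l.length = k := Finset.length_sort _
  set α : ℕ → ℝ := fun t => a (l.getD t 0) with hα
  -- (A) main comparison
  have hA : ∀ f : ℕ → ℕ, StrictMono f → ∀ qs : List ℚ, qs.length = k →
      |‖∑ i ∈ a.support, a i • x (f i)‖ - gJ qs (a.support.image f)| ≤
        ∑ t ∈ Finset.range k, |α t - (qs.getD t 0 : ℝ)| * C := by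
    intro f hf qs hqlen
    have hsort : ((a.support.image f).sort (· ≤ ·)) = l.map f := bs_sort_image f hf a.support
    have hsum : ∑ i ∈ a.support, a i • x (f i) =
        ∑ t ∈ Finset.range k, α t • x (f (l.getD t 0)) := by
      rw [bs_finset_sum a.support (fun i => a i • x (f i))]
    have hg : gJ qs (a.support.image f) =
        ‖∑ t ∈ Finset.range k, (qs.getD t 0 : ℝ) • x (f (l.getD t 0))‖ := by
      rw [hgJ]
      simp only [hsort, hqlen]
      congr 1
      apply Finset.sum_congr rfl
      intro t ht
      have htk : t < l.length := by
        rw [hllen]; exact Finset.mem_range.mp ht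
      congr 1
      rw [List.getD_eq_getElem _ _ (by simpa using htk), List.getD_eq_getElem _ _ htk]
      simp
    rw [hsum, hg]
    exact hdiff k α (fun t => (qs.getD t 0 : ℝ)) (fun t => x (f (l.getD t 0))) (fun t => hxC _)
  -- (B) Lipschitz property of the limits
  have hLip : ∀ qs qs' : List ℚ, qs.length = k → qs'.length = k →
      |Lfun (Encodable.encode qs) - Lfun (Encodable.encode qs')| ≤
        ∑ t ∈ Finset.range k, |(qs.getD t 0 : ℝ) - (qs'.getD t 0 : ℝ)| * C := by
    intro qs qs' hq hq'
    apply le_of_forall_pos_le_add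
    intro ε hε
    obtain ⟨ν, hν⟩ := hLfun (Encodable.encode qs) (ε/2) (by positivity)
    obtain ⟨ν', hν'⟩ := hLfun (Encodable.encode qs') (ε/2) (by positivity)
    set n₀ := max ν ν' with hn₀
    have hmonoshift : StrictMono (fun t => φ (n₀ + t)) := fun u v huv => hφmono (by omega)
    set s : Finset ℕ := Finset.image (fun t => φ (n₀ + t)) (Finset.range k) with hs
    have hscard : s.card = k := by
      rw [hs, Finset.card_image_of_injective _ hmonoshift.injective, Finset.card_range]
    have hssub : ∀ μ : ℕ, μ ≤ n₀ → ↑s ⊆ φ '' Set.Ici μ := by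
      intro μ hμ u hu
      rw [hs] at hu
      simp only [Finset.coe_image, Set.mem_image, Finset.mem_coe, Finset.mem_range] at hu
      obtain ⟨t, -, rfl⟩ := hu
      exact ⟨n₀ + t, by simp; omega, rfl⟩
    have h1 : |G (Encodable.encode qs) s - Lfun (Encodable.encode qs)| ≤ ε/2 :=
      hν s (by rw [hKenc, hq, hscard]) (hssub ν (le_max_left _ _))
    have h2 : |G (Encodable.encode qs') s - Lfun (Encodable.encode qs')| ≤ ε/2 :=
      hν' s (by rw [hKenc, hq', hscard]) (hssub ν' (le_max_right _ _))
    have h3 : |gJ qs s - gJ qs' s| ≤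
        ∑ t ∈ Finset.range k, |(qs.getD t 0 : ℝ) - (qs'.getD t 0 : ℝ)| * C := by
      rw [hgJ]
      simp only [hq, hq']
      exact hdiff k _ _ (fun t => x ((s.sort (· ≤ ·)).getD t 0)) (fun t => hxC _)
    rw [hGenc] at h1
    rw [hGenc] at h2
    calc |Lfun (Encodable.encode qs) - Lfun (Encodable.encode qs')|
        = |(Lfun (Encodable.encode qs) - gJ qs s) + (gJ qs s - gJ qs' s) +
            (gJ qs' s - Lfun (Encodable.encode qs'))| := by ring_nf
      _ ≤ |Lfun (Encodable.encode qs) - gJ qs s| + |gJ qs s - gJ qs' s| +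
            |gJ qs' s - Lfun (Encodable.encode qs')| := by
          exact (abs_add_le _ _).trans (add_le_add_left (abs_add_le _ _) _)
      _ ≤ ε/2 + (∑ t ∈ Finset.range k, |(qs.getD t 0 : ℝ) - (qs'.getD t 0 : ℝ)| * C) + ε/2 := by
          have h1' : |Lfun (Encodable.encode qs) - gJ qs s| ≤ ε/2 := by
            rw [abs_sub_comm]; exact h1
          have h2' : |gJ qs' s - Lfun (Encodable.encode qs')| ≤ ε/2 := h2
          exact add_le_add (add_le_add h1' h3) h2'
      _ = (∑ t ∈ Finset.range k, |(qs.getD t 0 : ℝ) - (qs'.getD t 0 : ℝ)| * C) + ε := by ring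
  -- rational approximations
  have happrox : ∀ j : ℕ, ∃ qs : List ℚ, qs.length = k ∧
      ∀ t, t < k → |α t - (qs.getD t 0 : ℝ)| ≤ 1/(j+1) := by
    intro j
    have hpos : (0:ℝ) < 1/(j+1) := by positivity
    refine ⟨(List.range k).map (fun t => (exists_rat_near (α t) hpos).choose), by simp, ?_⟩
    intro t ht
    have hlen : t < ((List.range k).map
        (fun t => (exists_rat_near (α t) hpos).choose)).length := by simpa using ht
    rw [List.getD_eq_getElem _ _ hlen]
    simp only [List.getElem_map, List.getElem_range]
    exact ((exists_rat_near (α t) hpos).choose_spec).le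
  choose qa hqa1 hqa2 using happrox
  set v : ℕ → ℝ := fun j => Lfun (Encodable.encode (qa j)) with hv
  -- termwise bounds
  have hsumbound : ∀ j : ℕ, ∑ t ∈ Finset.range k, |α t - ((qa j).getD t 0 : ℝ)| * C ≤
      k * C * (1/(j+1)) := by
    intro j
    calc ∑ t ∈ Finset.range k, |α t - ((qa j).getD t 0 : ℝ)| * C
        ≤ ∑ t ∈ Finset.range k, (1/(j+1)) * C := by
          apply Finset.sum_le_sum
          intro t ht
          exact mul_le_mul_of_nonneg_right (hqa2 j t (Finset.mem_range.mp ht)) hCnn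
      _ = k * C * (1/(j+1)) := by
          rw [Finset.sum_const, Finset.card_range, nsmul_eq_mul]; ring
  have hvv : ∀ i j : ℕ, |v i - v j| ≤ k * C * (1/(i+1)) + k * C * (1/(j+1)) := by
    intro i j
    calc |v i - v j| ≤ ∑ t ∈ Finset.range k,
          |((qa i).getD t 0 : ℝ) - ((qa j).getD t 0 : ℝ)| * C :=
        hLip (qa i) (qa j) (hqa1 i) (hqa1 j)
      _ ≤ ∑ t ∈ Finset.range k,
          (|α t - ((qa i).getD t 0 : ℝ)| * C + |α t - ((qa j).getD t 0 : ℝ)| * C) := by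
          apply Finset.sum_le_sum
          intro t ht
          have : |((qa i).getD t 0 : ℝ) - ((qa j).getD t 0 : ℝ)| ≤
              |α t - ((qa i).getD t 0 : ℝ)| + |α t - ((qa j).getD t 0 : ℝ)| := by
            have h0 := abs_add_le (((qa i).getD t 0 : ℝ) - α t) (α t - ((qa j).getD t 0 : ℝ))
            rw [sub_add_sub_cancel] at h0
            rw [abs_sub_comm (((qa i).getD t 0 : ℝ)) (α t)] at h0
            exact h0
          calc |((qa i).getD t 0 : ℝ) - ((qa j).getD t 0 : ℝ)| * C
              ≤ (|α t - ((qa i).getD t 0 : ℝ)| + |α t - ((qa j).getD t 0 : ℝ)|) * C :=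
                mul_le_mul_of_nonneg_right this hCnn
            _ = _ := by ring
      _ = (∑ t ∈ Finset.range k, |α t - ((qa i).getD t 0 : ℝ)| * C) +
          (∑ t ∈ Finset.range k, |α t - ((qa j).getD t 0 : ℝ)| * C) := Finset.sum_add_distrib
      _ ≤ k * C * (1/(i+1)) + k * C * (1/(j+1)) := add_le_add (hsumbound i) (hsumbound j)
  -- v is Cauchy
  have hvc : CauchySeq v := by
    rw [Metric.cauchySeq_iff']
    intro ε hε
    obtain ⟨N, hN⟩ := exists_nat_one_div_lt (K := ℝ) (div_pos hε (by positivity : (0:ℝ) < 2*k*C+1))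
    refine ⟨N, fun n hn => ?_⟩
    rw [Real.dist_eq]
    have h1 : (1:ℝ)/(n+1) ≤ 1/(N+1) := by
      apply div_le_div_of_nonneg_left one_pos.le (by positivity)
      have : (N:ℝ) ≤ n := Nat.cast_le.mpr hn
      linarith
    calc |v n - v N| ≤ k * C * (1/(n+1)) + k * C * (1/(N+1)) := hvv n N
      _ ≤ (2*k*C+1) * (1/(N+1)) := by
          have hkC : (0:ℝ) ≤ k*C := by positivity
          have h2 : (0:ℝ) ≤ 1/((N:ℝ)+1) := by positivity
          nlinarith
      _ < (2*k*C+1) * (ε / (2*k*C+1)) := by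
          apply mul_lt_mul_of_pos_left hN (by positivity)
      _ = ε := by field_simp
  obtain ⟨L, hLlim⟩ := cauchySeq_tendsto_of_complete hvc
  refine ⟨L, ?_⟩
  intro ε hε
  -- choose good j
  rw [Metric.tendsto_atTop] at hLlim
  obtain ⟨N₁, hN₁⟩ := hLlim (ε/4) (by positivity)
  obtain ⟨j₀, hj₀⟩ := exists_nat_one_div_lt (K := ℝ)
    (div_pos (by positivity : (0:ℝ) < ε/4) (by positivity : (0:ℝ) < k*C+1))
  set j := max j₀ N₁ with hj
  have hδ : (1:ℝ)/(j+1) ≤ 1/(j₀+1) := by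
    apply div_le_div_of_nonneg_left one_pos.le (by positivity)
    have : (j₀:ℝ) ≤ j := Nat.cast_le.mpr (le_max_left _ _)
    linarith
  have hterm1 : k * C * (1/(j+1)) ≤ ε/4 := by
    have hkC : (0:ℝ) ≤ k*C := by positivity
    have h2 : k * C * (1/(j+1)) ≤ (k*C+1) * (1/(j₀+1)) := by
      have h3 : (0:ℝ) ≤ 1/((j₀:ℝ)+1) := by positivity
      have h6 : (k:ℝ) * C * (1/(j+1)) ≤ k * C * (1/(j₀+1)) :=
        mul_le_mul_of_nonneg_left hδ hkC
      nlinarith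
    have h4 : (k*C+1) * (1/(j₀+1)) < (k*C+1) * (ε/4 / (k*C+1)) :=
      mul_lt_mul_of_pos_left hj₀ (by positivity)
    have h5 : (k*C+1) * (ε/4 / (k*C+1)) = ε/4 := by field_simp
    linarith
  have hterm3 : |v j - L| ≤ ε/4 := by
    have := hN₁ j (le_max_right _ _)
    rw [Real.dist_eq] at this
    exact this.le
  obtain ⟨ν, hν⟩ := hLfun (Encodable.encode (qa j)) (ε/4) (by positivity)
  refine ⟨ν + 1, Nat.succ_pos _, ?_⟩
  intro n hn hnν
  set f : ℕ → ℕ := fun i => φ (n i) with hf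
  have hfmono : StrictMono f := fun u v' huv => hφmono (hn huv)
  set s : Finset ℕ := a.support.image f with hs
  have hscard : s.card = k := by
    rw [hs, Finset.card_image_of_injective _ hfmono.injective, hk]
  have hssub : ↑s ⊆ φ '' Set.Ici ν := by
    intro u hu
    rw [hs] at hu
    simp only [Finset.coe_image, Set.mem_image, Finset.mem_coe] at hu
    obtain ⟨i, -, rfl⟩ := hu
    exact ⟨n i, by simp only [Set.mem_Ici]; have := hnν i; omega, rfl⟩
  have hterm2 : |gJ (qa j) s - v j| ≤ ε/4 := by
    have := hν s (by rw [hKenc, hqa1 j, hscard]) hssub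
    rwa [hGenc] at this
  have hterm1' : |‖∑ i ∈ a.support, a i • x (f i)‖ - gJ (qa j) s| ≤ ε/4 :=
    le_trans (hA f hfmono (qa j) (hqa1 j)) (le_trans (hsumbound j) hterm1)
  calc |‖∑ i ∈ a.support, a i • x (φ (n i))‖ - L|
      = |(‖∑ i ∈ a.support, a i • x (f i)‖ - gJ (qa j) s) + (gJ (qa j) s - v j) +
          (v j - L)| := by rw [hf]; ring_nf
    _ ≤ |‖∑ i ∈ a.support, a i • x (f i)‖ - gJ (qa j) s| + |gJ (qa j) s - v j| +
          |v j - L| := (abs_add_le _ _).trans (add_le_add_left (abs_add_le _ _) _)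
    _ ≤ ε/4 + ε/4 + ε/4 := add_le_add (add_le_add hterm1' hterm2) hterm3
    _ ≤ ε := by linarith
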